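/- Let (X,d,μ) be an η-Ahlfors regular quasi-metric measure space with η > 0 and triangular constant κ ≥ 1, let ρ be the third order hypermetric induced by d, and let 0 < γ < 2η. Then for every pair f, g of nonnegative measurable functions on X and every x ∈ X, T^γ(f,g)(x) ≤ (2κ)^γ (I_{η−γ/2}f)(x) · (I_{η−γ/2}g)(x). -/

import Mathlib

open MeasureTheory ENNReal

/-- The third order hypermetric induced by `d`:
`ρ(x,y,z) = inf_{u ∈ X} max {d(x,u), d(y,u), d(z,u)}`. -/
noncomputable def hyperRho {X : Type*} (d : X → X → ℝ) (x y z : X) : ℝ :=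
  ⨅ u : X, max (d x u) (max (d y u) (d z u))

/-- `d` is a quasi-metric on `X` with triangular constant `κ`. -/
def IsQuasiMetric {X : Type*} (d : X → X → ℝ) (κ : ℝ) : Prop :=
  (∀ x y, 0 ≤ d x y) ∧ (∀ x y, (d x y = 0 ↔ x = y)) ∧ (∀ x y, d x y = d y x) ∧
    (∀ x y z, d x z ≤ κ * (d x y + d y z))

/-- `(X,d,μ)` is `η`-Ahlfors regular with constants `a ≤ A`. -/
def IsAhlfors {X : Type*} [MeasurableSpace X] (d : X → X → ℝ) (μ : Measure X)
    (η a A : ℝ) : Prop :=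
  ∀ x : X, ∀ r : ℝ, 0 < r →
    ENNReal.ofReal (a * r ^ η) ≤ μ {y | d x y < r} ∧
      μ {y | d x y < r} ≤ ENNReal.ofReal (A * r ^ η)

/-- The bilinear fractional integral operator
`T^γ(f,g)(x) = ∬ f(y) g(z) ρ(x,y,z)^{-γ} dμ(y) dμ(z)`
(with the convention `0 ^ (-γ) = ∞` for `γ > 0`, as in `ENNReal.rpow`). -/
noncomputable def Tgamma {X : Type*} [MeasurableSpace X] (d : X → X → ℝ)
    (μ : Measure X) (γ : ℝ) (f g : X → ℝ≥0∞) (x : X) : ℝ≥0∞ :=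
  ∫⁻ y, ∫⁻ z, f y * g z * (ENNReal.ofReal (hyperRho d x y z)) ^ (-γ) ∂μ ∂μ

/-- The linear fractional integral operator of order `β` in the `η`-dimensional
space `(X,d,μ)`: `I_β h(x) = ∫ h(y) d(x,y)^{β-η} dμ(y)`. -/
noncomputable def fracInt {X : Type*} [MeasurableSpace X] (d : X → X → ℝ)
    (μ : Measure X) (β η : ℝ) (h : X → ℝ≥0∞) (x : X) : ℝ≥0∞ :=
  ∫⁻ y, h y * (ENNReal.ofReal (d x y)) ^ (β - η) ∂μ

/-- The `L^p(μ)` norm of a nonnegative function, `p` a real exponent. -/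
noncomputable def lpNorm {X : Type*} [MeasurableSpace X] (μ : Measure X) (p : ℝ)
    (h : X → ℝ≥0∞) : ℝ≥0∞ :=
  (∫⁻ x, (h x) ^ p ∂μ) ^ (1 / p)

lemma aux_rpow_bound {K R D : ℝ≥0∞} (hK0 : K ≠ 0) (hKt : K ≠ ∞) (hRt : R ≠ ∞)
    {p : ℝ} (hp : 0 ≤ p) (hD : D ≤ K * R) : R ^ (-p) ≤ K ^ p * D ^ (-p) := by
  have h1 : (K * R) ^ (-p) ≤ D ^ (-p) := by
    rw [ENNReal.rpow_neg, ENNReal.rpow_neg]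
    exact ENNReal.inv_le_inv.mpr (ENNReal.rpow_le_rpow hD hp)
  calc R ^ (-p) = K ^ p * (K ^ (-p) * R ^ (-p)) := by
        rw [← mul_assoc, ← ENNReal.rpow_add _ _ hK0 hKt]
        simp
    _ = K ^ p * (K * R) ^ (-p) := by
        rw [ENNReal.mul_rpow_of_ne_top hKt hRt]
    _ ≤ K ^ p * D ^ (-p) := mul_le_mul_right h1 _

/-- Pointwise bound `T^γ(f,g)(x) ≤ (2κ)^γ (I_{η-γ/2}f)(x) · (I_{η-γ/2}g)(x)`. -/
theorem statement6 {X : Type*} [MeasurableSpace X]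
    (d : X → X → ℝ) (κ : ℝ) (hκ : 1 ≤ κ) (hqm : IsQuasiMetric d κ)
    (hd_meas : Measurable fun p : X × X => d p.1 p.2)
    (μ : Measure X) (η : ℝ) (hη : 0 < η)
    (a A : ℝ) (ha : 0 < a) (haA : a ≤ A) (hAhl : IsAhlfors d μ η a A)
    (γ : ℝ) (hγ0 : 0 < γ) (hγ2η : γ < 2 * η)
    (f g : X → ℝ≥0∞) (hf : Measurable f) (hg : Measurable g) (x : X) :
    Tgamma d μ γ f g x ≤
      ENNReal.ofReal ((2 * κ) ^ γ) *
        (fracInt d μ (η - γ / 2) η f x * fracInt d μ (η - γ / 2) η g x) := by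
  obtain ⟨hd0, hdeq, hdsym, htri⟩ := hqm
  have hX : Nonempty X := ⟨x⟩
  have hκ0 : (0:ℝ) < 2 * κ := by linarith
  -- basic bound : d x w ≤ 2κ ρ(x,y,z) for w = y and w = z
  have hbound : ∀ y z w : X, (w = y ∨ w = z) → d x w ≤ 2 * κ * hyperRho d x y z := by
    intro y z w hw
    have h : d x w / (2 * κ) ≤ hyperRho d x y z := by
      refine le_ciInf fun u => ?_
      set M := max (d x u) (max (d y u) (d z u)) with hM
      have h1 : d x u ≤ M := le_max_left _ _
      have h2 : d w u ≤ M := by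
        rcases hw with rfl | rfl
        · exact le_trans (le_max_left _ _) (le_max_right _ _)
        · exact le_trans (le_max_right _ _) (le_max_right _ _)
      have h3 : d x w ≤ κ * (d x u + d u w) := htri x u w
      rw [div_le_iff₀ hκ0]
      have h4 : d u w = d w u := hdsym u w
      nlinarith
    calc d x w = d x w / (2 * κ) * (2 * κ) := by field_simp
      _ ≤ hyperRho d x y z * (2 * κ) := by
          exact mul_le_mul_of_nonneg_right h (le_of_lt hκ0)
      _ = 2 * κ * hyperRho d x y z := by ring
  set K : ℝ≥0∞ := ENNReal.ofReal (2 * κ) with hK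
  have hK0' : K ≠ 0 := by
    simp [hK, ENNReal.ofReal_pos.mpr hκ0, ne_of_gt]
    linarith
  have hKt : K ≠ ∞ := ENNReal.ofReal_ne_top
  have hp2 : (0:ℝ) ≤ γ / 2 := by positivity
  -- pointwise bound
  have key : ∀ y z : X,
      (ENNReal.ofReal (hyperRho d x y z)) ^ (-γ) ≤
        ENNReal.ofReal ((2 * κ) ^ γ) *
          ((ENNReal.ofReal (d x y)) ^ (η - γ / 2 - η) *
           (ENNReal.ofReal (d x z)) ^ (η - γ / 2 - η)) := by
    intro y z
    have hexp : η - γ / 2 - η = -(γ / 2) := by ring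
    rw [hexp]
    set R := ENNReal.ofReal (hyperRho d x y z) with hR
    have hRt : R ≠ ∞ := ENNReal.ofReal_ne_top
    have hDy : ENNReal.ofReal (d x y) ≤ K * R := by
      rw [hK, hR, ← ENNReal.ofReal_mul (le_of_lt hκ0)]
      exact ENNReal.ofReal_le_ofReal (hbound y z y (Or.inl rfl))
    have hDz : ENNReal.ofReal (d x z) ≤ K * R := by
      rw [hK, hR, ← ENNReal.ofReal_mul (le_of_lt hκ0)]
      exact ENNReal.ofReal_le_ofReal (hbound y z z (Or.inr rfl))
    have b1 := aux_rpow_bound hK0' hKt hRt hp2 hDy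
    have b2 := aux_rpow_bound hK0' hKt hRt hp2 hDz
    have hsplit : R ^ (-γ) = R ^ (-(γ/2)) * R ^ (-(γ/2)) := by
      by_cases hR0 : R = 0
      · rw [hR0, ENNReal.zero_rpow_of_neg (by linarith),
          ENNReal.zero_rpow_of_neg (by linarith)]
        simp
      · rw [← ENNReal.rpow_add _ _ hR0 hRt]
        ring_nf
    have hKγ : ENNReal.ofReal ((2 * κ) ^ γ) = K ^ (γ/2) * K ^ (γ/2) := by
      rw [hK, ← ENNReal.rpow_add _ _ hK0' hKt, ENNReal.ofReal_rpow_of_pos hκ0]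
      norm_num
    calc R ^ (-γ) = R ^ (-(γ/2)) * R ^ (-(γ/2)) := hsplit
      _ ≤ (K ^ (γ/2) * (ENNReal.ofReal (d x y)) ^ (-(γ/2))) *
          (K ^ (γ/2) * (ENNReal.ofReal (d x z)) ^ (-(γ/2))) := mul_le_mul' b1 b2
      _ = ENNReal.ofReal ((2 * κ) ^ γ) *
          ((ENNReal.ofReal (d x y)) ^ (-(γ/2)) *
           (ENNReal.ofReal (d x z)) ^ (-(γ/2))) := by rw [hKγ]; ring
  -- measurable weights
  set e : ℝ := η - γ / 2 - η with he
  have hdz_meas : Measurable fun z : X => d x z :=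
    hd_meas.comp (measurable_prodMk_left)
  have hb_meas : Measurable fun z : X => g z * (ENNReal.ofReal (d x z)) ^ e :=
    hg.mul ((hdz_meas.ennreal_ofReal).pow measurable_const)
  set C : ℝ≥0∞ := ENNReal.ofReal ((2 * κ) ^ γ) with hC
  set IG : ℝ≥0∞ := fracInt d μ (η - γ / 2) η g x with hIG
  calc Tgamma d μ γ f g x
      ≤ ∫⁻ y, ∫⁻ z, f y * g z *
          (C * ((ENNReal.ofReal (d x y)) ^ e * (ENNReal.ofReal (d x z)) ^ e)) ∂μ ∂μ := by
        refine lintegral_mono fun y => lintegral_mono fun z => ?_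
        exact mul_le_mul_right (key y z) _
    _ = ∫⁻ y, ∫⁻ z, (C * (f y * (ENNReal.ofReal (d x y)) ^ e)) *
          (g z * (ENNReal.ofReal (d x z)) ^ e) ∂μ ∂μ := by
        congr 1; funext y; congr 1; funext z; ring
    _ = ∫⁻ y, (C * IG) * (f y * (ENNReal.ofReal (d x y)) ^ e) ∂μ := by
        congr 1; funext y
        rw [lintegral_const_mul _ hb_meas]
        rw [hIG, fracInt]
        ring
    _ = (C * IG) * ∫⁻ y, f y * (ENNReal.ofReal (d x y)) ^ e ∂μ := by
        have hfa_meas : Measurable fun y : X => f y * (ENNReal.ofReal (d x y)) ^ e :=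
          hf.mul ((hdz_meas.ennreal_ofReal).pow measurable_const)
        exact lintegral_const_mul _ hfa_meas
    _ = C * (fracInt d μ (η - γ / 2) η f x * IG) := by
        rw [fracInt]; ring
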